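/- For every fixed integer k ≥ 2 and every fixed real p ≥ 1 there exists q̄ such that for all integers q ≥ q̄, all integers s with 0 ≤ s ≤ q−1, and all reals a, b with 0 ≤ a, b ≤ k, one has ((a·q^{(p+1)(q−s)})^p + q^{p((p+1)(q−s)−1)})^{1/p} > a·q^{(p+1)(q−s)} + b·q^{(p+1)(q−s−1)}. -/

import Mathlib

lemma mvt_rpow_bound (p : ℝ) (hp : 1 ≤ p) (M a ε : ℝ) (ha : 0 ≤ a) (hε : 0 ≤ ε)
    (hM : a + ε ≤ M) : (a + ε) ^ p ≤ a ^ p + p * M ^ (p - 1) * ε := by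
  rcases eq_or_lt_of_le hε with h0 | h0
  · rw [← h0]; simp
  · obtain ⟨c, hc, hceq⟩ := exists_hasDerivAt_eq_slope (fun x => x ^ p)
      (fun x => p * x ^ (p - 1)) (by linarith : a < a + ε)
      (fun x _ => (Real.continuousAt_rpow_const x p (Or.inr (by linarith))).continuousWithinAt)
      (fun x _ => Real.hasDerivAt_rpow_const (Or.inr hp))
    have hc0 : 0 ≤ c := le_of_lt (lt_of_le_of_lt ha hc.1)
    have hcM : c ≤ M := le_trans hc.2.le hM
    have hcb : c ^ (p - 1) ≤ M ^ (p - 1) :=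
      Real.rpow_le_rpow hc0 hcM (by linarith)
    have h1 : (a + ε) ^ p - a ^ p = p * c ^ (p - 1) * ε := by
      have := hceq
      rw [add_sub_cancel_left, eq_div_iff h0.ne'] at this
      nlinarith [this]
    have hpc : p * c ^ (p - 1) * ε ≤ p * M ^ (p - 1) * ε := by
      apply mul_le_mul_of_nonneg_right _ hε
      exact mul_le_mul_of_nonneg_left hcb (by linarith)
    linarith

/-- For every fixed integer `k ≥ 2` and fixed real `p ≥ 1` there exists `q̄`
such that for all integers `q ≥ q̄`, all integers `s` with `0 ≤ s ≤ q − 1` and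
all reals `a, b` with `0 ≤ a, b ≤ k`:
`((a·q^{(p+1)(q−s)})^p + q^{p((p+1)(q−s)−1)})^{1/p}
   > a·q^{(p+1)(q−s)} + b·q^{(p+1)(q−s−1)}`,
all powers being real powers. -/
theorem estimate_lemma (k : ℕ) (hk : 2 ≤ k) (p : ℝ) (hp : 1 ≤ p) :
    ∃ qbar : ℕ, ∀ q : ℕ, qbar ≤ q → ∀ s : ℕ, s + 1 ≤ q →
      ∀ a b : ℝ, 0 ≤ a → a ≤ (k : ℝ) → 0 ≤ b → b ≤ (k : ℝ) →
        a * (q : ℝ) ^ ((p + 1) * ((q : ℝ) - (s : ℝ))) +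
            b * (q : ℝ) ^ ((p + 1) * ((q : ℝ) - (s : ℝ) - 1)) <
          ((a * (q : ℝ) ^ ((p + 1) * ((q : ℝ) - (s : ℝ)))) ^ p +
              (q : ℝ) ^ (p * ((p + 1) * ((q : ℝ) - (s : ℝ)) - 1))) ^ (1 / p) := by
  have hp0 : (0:ℝ) < p := by linarith
  set C : ℝ := p * k * ((k : ℝ) + 1) ^ (p - 1) with hC
  have hCnn : 0 ≤ C := by
    apply mul_nonneg (mul_nonneg hp0.le (Nat.cast_nonneg k))
    exact Real.rpow_nonneg (by positivity) _
  refine ⟨⌈C⌉₊ + k + 2, fun q hq s hs a b ha hak hb hbk => ?_⟩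
  have hqC : C < (q : ℝ) := by
    have h1 : C ≤ (⌈C⌉₊ : ℝ) := Nat.le_ceil C
    have h2 : (⌈C⌉₊ + k + 2 : ℕ) ≤ q := hq
    have h3 : ((⌈C⌉₊ + k + 2 : ℕ) : ℝ) ≤ (q : ℝ) := Nat.cast_le.mpr h2
    push_cast at h3
    linarith
  have hqk : (k : ℝ) ≤ (q : ℝ) := by
    have h0 : (0:ℝ) ≤ (⌈C⌉₊ : ℝ) := Nat.cast_nonneg _
    have : (k : ℝ) ≤ ((⌈C⌉₊ + k + 2 : ℕ) : ℝ) := by push_cast; linarith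
    exact this.trans (Nat.cast_le.mpr hq)
  have hk2 : (2 : ℝ) ≤ (k : ℝ) := by exact_mod_cast hk
  have hQ1 : (1 : ℝ) < (q : ℝ) := by linarith
  have hQ0 : (0 : ℝ) < (q : ℝ) := by linarith
  set Q : ℝ := (q : ℝ)
  set ε : ℝ := b * Q ^ (-(p + 1)) with hε
  have hεnn : 0 ≤ ε := mul_nonneg hb (Real.rpow_nonneg hQ0.le _)
  have hεk : ε ≤ (k : ℝ) * Q ^ (-(p + 1)) :=
    mul_le_mul_of_nonneg_right hbk (Real.rpow_nonneg hQ0.le _)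
  have hQexp : Q ^ (-(p + 1)) ≤ Q ^ (-2 : ℝ) :=
    Real.rpow_le_rpow_of_exponent_le hQ1.le (by linarith)
  have hε1 : ε ≤ 1 := by
    have h2 : Q ^ (-2 : ℝ) = 1 / (Q * Q) := by
      rw [Real.rpow_neg hQ0.le, show (2:ℝ) = ((2:ℕ):ℝ) by norm_num, Real.rpow_natCast]
      rw [pow_two, one_div]
    have : (k : ℝ) * Q ^ (-2 : ℝ) ≤ 1 := by
      rw [h2, mul_one_div, div_le_one (by nlinarith)]
      nlinarith
    calc ε ≤ (k : ℝ) * Q ^ (-(p+1)) := hεk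
      _ ≤ (k : ℝ) * Q ^ (-2 : ℝ) := mul_le_mul_of_nonneg_left hQexp (by linarith)
      _ ≤ 1 := this
  -- core inequality: (a + ε)^p < a^p + Q^(-p)
  have hcore : (a + ε) ^ p < a ^ p + Q ^ (-p) := by
    have h1 : (a + ε) ^ p ≤ a ^ p + p * ((k : ℝ) + 1) ^ (p - 1) * ε :=
      mvt_rpow_bound p hp ((k : ℝ) + 1) a ε ha hεnn (by linarith)
    have h2 : p * ((k : ℝ) + 1) ^ (p - 1) * ε ≤ C * Q ^ (-(p + 1)) := by
      calc p * ((k : ℝ) + 1) ^ (p - 1) * ε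
          ≤ p * ((k : ℝ) + 1) ^ (p - 1) * ((k : ℝ) * Q ^ (-(p + 1))) := by
            apply mul_le_mul_of_nonneg_left hεk
            exact mul_nonneg hp0.le (Real.rpow_nonneg (by positivity) _)
        _ = C * Q ^ (-(p + 1)) := by rw [hC]; ring
    have h3 : C * Q ^ (-(p + 1)) < Q ^ (-p) := by
      have hQp : Q ^ (-p) = Q * Q ^ (-(p + 1)) := by
        rw [← Real.rpow_one_add' (by positivity) (by intro h; nlinarith) ]
        ring_nf
      rw [hQp]
      exact mul_lt_mul_of_pos_right hqC (Real.rpow_pos_of_pos hQ0 _)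
    linarith
  -- take p-th roots
  have hroot : a + ε < (a ^ p + Q ^ (-p)) ^ (1 / p) := by
    have h1 : ((a + ε) ^ p) ^ (1 / p) < (a ^ p + Q ^ (-p)) ^ (1 / p) :=
      Real.rpow_lt_rpow (Real.rpow_nonneg (by linarith) _) hcore (by positivity)
    rwa [← Real.rpow_mul (by linarith : (0:ℝ) ≤ a + ε),
      show p * (1 / p) = 1 by field_simp, Real.rpow_one] at h1
  -- algebra: factor out Q ^ e
  set e : ℝ := (p + 1) * (Q - (s : ℝ)) with he
  have hX : 0 < Q ^ e := Real.rpow_pos_of_pos hQ0 _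
  have hL : a * Q ^ e + b * Q ^ ((p + 1) * (Q - (s : ℝ) - 1)) = (a + ε) * Q ^ e := by
    rw [show (p + 1) * (Q - (s : ℝ) - 1) = e + (-(p + 1)) by rw [he]; ring,
      Real.rpow_add hQ0, hε]
    ring
  have hSnn : 0 ≤ a ^ p + Q ^ (-p) :=
    add_nonneg (Real.rpow_nonneg ha _) (Real.rpow_nonneg hQ0.le _)
  have hR : ((a * Q ^ e) ^ p + Q ^ (p * (e - 1))) ^ (1 / p)
      = (a ^ p + Q ^ (-p)) ^ (1 / p) * Q ^ e := by
    have h1 : (a * Q ^ e) ^ p = a ^ p * Q ^ (e * p) := by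
      rw [Real.mul_rpow ha (Real.rpow_nonneg hQ0.le _), ← Real.rpow_mul hQ0.le]
    have h2 : Q ^ (p * (e - 1)) = Q ^ (e * p) * Q ^ (-p) := by
      rw [← Real.rpow_add hQ0]; ring_nf
    rw [h1, h2,
      show a ^ p * Q ^ (e * p) + Q ^ (e * p) * Q ^ (-p) = Q ^ (e * p) * (a ^ p + Q ^ (-p))
        by ring,
      Real.mul_rpow (Real.rpow_nonneg hQ0.le _) hSnn,
      ← Real.rpow_mul hQ0.le, show e * p * (1 / p) = e by field_simp]
    ring
  rw [hL, hR]
  exact mul_lt_mul_of_pos_right hroot hX
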